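/- For β > 0 and probability densities p, q on a measure space, the density power divergence D_β(p‖q) := (1/(β(1+β)))∫p^{1+β} − (1/β)∫p q^β + (1/(1+β))∫q^{1+β} is nonnegative, and equals zero if and only if p = q almost everywhere. -/

import Mathlib

open MeasureTheory Real

private lemma dpd_key_lt {β a b : ℝ} (hβ : 0 < β) (ha : 0 ≤ a) (hb : 0 ≤ b)
    (hne : a ≠ b) : (1 + β) * (a * b ^ β) < a ^ (1 + β) + β * b ^ (1 + β) := by
  rcases eq_or_lt_of_le hb with rfl | hb
  · have ha' : 0 < a := lt_of_le_of_ne ha (Ne.symm hne)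
    rw [Real.zero_rpow hβ.ne', Real.zero_rpow (by positivity : (1:ℝ) + β ≠ 0)]
    simpa using Real.rpow_pos_of_pos ha' (1 + β)
  · set t : ℝ := a / b - 1 with ht
    have htge : -1 ≤ t := by
      have : 0 ≤ a / b := div_nonneg ha hb.le
      simp [ht]; linarith
    have htne : t ≠ 0 := by
      simp only [ht, sub_ne_zero]
      intro h
      exact hne (by field_simp at h; linarith)
    have hp : (1:ℝ) < 1 + β := by linarith
    have hB := one_add_mul_self_lt_rpow_one_add htge htne hp
    have h1t : (1:ℝ) + t = a / b := by simp [ht]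
    rw [h1t] at hB
    have hbpow : (0:ℝ) < b ^ (1 + β) := Real.rpow_pos_of_pos hb _
    have hB2 : (1 + (1 + β) * t) * b ^ (1 + β) < (a / b) ^ (1 + β) * b ^ (1 + β) :=
      mul_lt_mul_of_pos_right hB hbpow
    rw [Real.div_rpow ha hb.le, div_mul_cancel₀ _ hbpow.ne'] at hB2
    have hsplit : b ^ (1 + β) = b * b ^ β := by
      rw [Real.rpow_add hb]; simp
    rw [hsplit] at hB2 ⊢
    have hab : t * b = a - b := by rw [ht, sub_mul, div_mul_cancel₀ _ hb.ne', one_mul]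
    have hexp : (1 + (1 + β) * t) * (b * b ^ β)
        = b * b ^ β + (1 + β) * (a - b) * b ^ β := by
      rw [← hab]; ring
    rw [hexp] at hB2
    linarith

private lemma dpd_key_le {β a b : ℝ} (hβ : 0 < β) (ha : 0 ≤ a) (hb : 0 ≤ b) :
    (1 + β) * (a * b ^ β) ≤ a ^ (1 + β) + β * b ^ (1 + β) := by
  rcases eq_or_ne a b with rfl | hne
  · have : a * a ^ β = a ^ (1 + β) := by
      rw [Real.rpow_add' ha (by positivity)]; simp
    rw [this]; ring_nf; exact le_refl _
  · exact (dpd_key_lt hβ ha hb hne).le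

/-- Nonnegativity of the density power divergence, and its vanishing iff `p = q` a.e. -/
theorem dpd_nonneg_and_eq_zero_iff
    {α : Type*} [MeasurableSpace α] (μ : Measure α) [SigmaFinite μ]
    (β : ℝ) (hβ : 0 < β)
    (p q : α → ℝ)
    (hpm : Measurable p) (hqm : Measurable q)
    (hp0 : ∀ x, 0 ≤ p x) (hq0 : ∀ x, 0 ≤ q x)
    (hp1 : ∫ x, p x ∂μ = 1) (hq1 : ∫ x, q x ∂μ = 1)
    (hippb : Integrable (fun x => p x ^ (1 + β)) μ)
    (hipqb : Integrable (fun x => p x * q x ^ β) μ)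
    (hiqqb : Integrable (fun x => q x ^ (1 + β)) μ) :
    0 ≤ (1 / (β * (1 + β))) * (∫ x, p x ^ (1 + β) ∂μ)
        - (1 / β) * (∫ x, p x * q x ^ β ∂μ)
        + (1 / (1 + β)) * (∫ x, q x ^ (1 + β) ∂μ) ∧
    ((1 / (β * (1 + β))) * (∫ x, p x ^ (1 + β) ∂μ)
        - (1 / β) * (∫ x, p x * q x ^ β ∂μ)
        + (1 / (1 + β)) * (∫ x, q x ^ (1 + β) ∂μ) = 0 ↔ p =ᵐ[μ] q) := by
  have h1β : (0:ℝ) < 1 + β := by linarith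
  set g : α → ℝ := fun x => (1 / (β * (1 + β))) * p x ^ (1 + β)
      - (1 / β) * (p x * q x ^ β) + (1 / (1 + β)) * q x ^ (1 + β) with hg
  have hgint : Integrable g μ :=
    ((hippb.const_mul _).sub (hipqb.const_mul _)).add (hiqqb.const_mul _)
  have hgeq : ∫ x, g x ∂μ = (1 / (β * (1 + β))) * (∫ x, p x ^ (1 + β) ∂μ)
      - (1 / β) * (∫ x, p x * q x ^ β ∂μ)
      + (1 / (1 + β)) * (∫ x, q x ^ (1 + β) ∂μ) := by
    simp only [hg]
    have h1 : Integrable (fun x => 1 / (β * (1 + β)) * p x ^ (1 + β)) μ := hippb.const_mul _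
    have h2 : Integrable (fun x => 1 / β * (p x * q x ^ β)) μ := hipqb.const_mul _
    have h3 : Integrable (fun x => 1 / (1 + β) * q x ^ (1 + β)) μ := hiqqb.const_mul _
    have h12 : Integrable (fun x => 1 / (β * (1 + β)) * p x ^ (1 + β)
        - 1 / β * (p x * q x ^ β)) μ := h1.sub h2
    rw [integral_add h12 h3, integral_sub h1 h2,
      integral_const_mul, integral_const_mul, integral_const_mul]
  have hrw : ∀ x, g x = (β * (1 + β))⁻¹ *
      (p x ^ (1 + β) + β * q x ^ (1 + β) - (1 + β) * (p x * q x ^ β)) := by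
    intro x
    simp only [hg]
    field_simp
    ring
  have hgnn : ∀ x, 0 ≤ g x := by
    intro x
    rw [hrw x]
    have h := dpd_key_le hβ (hp0 x) (hq0 x)
    have : (0:ℝ) ≤ (β * (1 + β))⁻¹ := by positivity
    nlinarith [h, this]
  constructor
  · rw [← hgeq]; exact integral_nonneg hgnn
  · rw [← hgeq]
    rw [integral_eq_zero_iff_of_nonneg hgnn hgint]
    constructor
    · intro h
      filter_upwards [h] with x hx
      by_contra hne
      have hlt := dpd_key_lt hβ (hp0 x) (hq0 x) hne
      rw [hrw x] at hx
      simp only [Pi.zero_apply] at hx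
      have hpos : (0:ℝ) < (β * (1 + β))⁻¹ := by positivity
      nlinarith [hx, hlt, hpos]
    · intro h
      filter_upwards [h] with x hx
      rw [hrw x, Pi.zero_apply, hx]
      have : q x * q x ^ β = q x ^ (1 + β) := by
        rw [Real.rpow_add' (hq0 x) (by positivity)]; simp
      rw [← this]; ring
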